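/- Let f : Finset V → ℝ be a submodular function on subsets of a finite set V (i.e., f(A ∪ B) + f(A ∩ B) ≤ f(A) + f(B) for all A, B). For subsets W₁,…,W_l of V and 1 ≤ r ≤ l, define W̃_r = ⋃_{S ⊆ {1,…,l}, |S| = r} ⋂_{i ∈ S} W_i. Then ∑_{i=1}^l f(W_i) ≥ ∑_{r=1}^l f(W̃_r). -/

import Mathlib

/-- Elements belonging to at least `r` of the sets `W 1, …, W l`. -/
def atLeastIn {V : Type*} [Fintype V] [DecidableEq V] {l : ℕ}
    (W : Fin l → Finset V) (r : ℕ) : Finset V :=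
  Finset.univ.filter (fun v => r ≤ (Finset.univ.filter (fun i => v ∈ W i)).card)

lemma atLeastIn_succ_subset {V : Type*} [Fintype V] [DecidableEq V] {l : ℕ}
    (W : Fin l → Finset V) (r : ℕ) : atLeastIn W (r + 1) ⊆ atLeastIn W r := by
  intro v hv
  simp only [atLeastIn, Finset.mem_filter, Finset.mem_univ, true_and] at *
  omega

lemma telescope {V : Type*} [Fintype V] [DecidableEq V]
    (f : Finset V → ℝ)
    (hf : ∀ A B : Finset V, f (A ∪ B) + f (A ∩ B) ≤ f A + f B)
    (B : Finset V) (T : ℕ → Finset V) (hT : ∀ r, T (r + 1) ⊆ T r) :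
    ∀ n : ℕ, ∑ r ∈ Finset.Icc 1 n, f (T r ∪ (T (r - 1) ∩ B)) + f (T n ∩ B)
      ≤ ∑ r ∈ Finset.Icc 1 n, f (T r) + f (T 0 ∩ B) := by
  intro n
  induction n with
  | zero => simp
  | succ n ih =>
    rw [Finset.sum_Icc_succ_top (by omega), Finset.sum_Icc_succ_top (by omega)]
    have h1 : T (n + 1) ∩ (T n ∩ B) = T (n + 1) ∩ B := by
      rw [← Finset.inter_assoc, Finset.inter_eq_left.mpr (hT n)]
    have h2 := hf (T (n + 1)) (T n ∩ B)
    rw [h1] at h2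
    have h3 : (n + 1 - 1 : ℕ) = n := by omega
    rw [h3]
    linarith

lemma count_split {V : Type*} [Fintype V] [DecidableEq V] {l : ℕ}
    (W : Fin (l + 1) → Finset V) (v : V) :
    (Finset.univ.filter (fun i : Fin (l + 1) => v ∈ W i)).card
      = (Finset.univ.filter (fun i : Fin l => v ∈ W i.castSucc)).card
        + (if v ∈ W (Fin.last l) then 1 else 0) := by
  rw [Finset.card_filter, Finset.card_filter, Fin.sum_univ_castSucc]

lemma atLeastIn_split {V : Type*} [Fintype V] [DecidableEq V] {l : ℕ}
    (W : Fin (l + 1) → Finset V) (s : ℕ) :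
    atLeastIn W (s + 1)
      = atLeastIn (fun i : Fin l => W i.castSucc) (s + 1)
        ∪ (atLeastIn (fun i : Fin l => W i.castSucc) s ∩ W (Fin.last l)) := by
  ext v
  simp only [atLeastIn, Finset.mem_union, Finset.mem_inter, Finset.mem_filter,
    Finset.mem_univ, true_and, count_split W v]
  by_cases h : v ∈ W (Fin.last l) <;> simp [h] <;> omega

lemma atLeastIn_top {V : Type*} [Fintype V] [DecidableEq V] {l : ℕ}
    (W : Fin l → Finset V) : atLeastIn W (l + 1) = ∅ := by
  ext v
  simp only [atLeastIn, Finset.mem_filter, Finset.mem_univ, true_and, Finset.notMem_empty,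
    iff_false]
  have := Finset.card_filter_le (Finset.univ : Finset (Fin l)) (fun i => v ∈ W i)
  simp at this
  omega

/-- k-way submodularity inequality. -/
theorem kway_submodular {V : Type*} [Fintype V] [DecidableEq V]
    (f : Finset V → ℝ)
    (hf : ∀ A B : Finset V, f (A ∪ B) + f (A ∩ B) ≤ f A + f B)
    (l : ℕ) (W : Fin l → Finset V) :
    ∑ r ∈ Finset.Icc 1 l, f (atLeastIn W r) ≤ ∑ i, f (W i) := by
  induction l with
  | zero => simp
  | succ l ih =>
    set W' : Fin l → Finset V := fun i => W i.castSucc with hW'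
    set B := W (Fin.last l) with hB
    set T : ℕ → Finset V := fun r => atLeastIn W' r with hT
    have hTsub : ∀ r, T (r + 1) ⊆ T r := fun r => atLeastIn_succ_subset W' r
    have hsplit : ∀ s : ℕ, atLeastIn W (s + 1) = T (s + 1) ∪ (T s ∩ B) :=
      fun s => atLeastIn_split W s
    have hT0 : T 0 = Finset.univ := by
      ext v; simp [hT, atLeastIn]
    have hrw : ∑ r ∈ Finset.Icc 1 (l + 1), f (atLeastIn W r)
        = ∑ r ∈ Finset.Icc 1 l, f (T r ∪ (T (r - 1) ∩ B)) + f (T l ∩ B) := by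
      rw [Finset.sum_Icc_succ_top (by omega)]
      congr 1
      · apply Finset.sum_congr rfl
        intro r hr
        simp only [Finset.mem_Icc] at hr
        obtain ⟨s, rfl⟩ : ∃ s, r = s + 1 := ⟨r - 1, by omega⟩
        rw [hsplit s]
        congr 1
      · rw [hsplit l]
        have : T (l + 1) = ∅ := atLeastIn_top W'
        rw [this, Finset.empty_union]
    rw [hrw, Fin.sum_univ_castSucc]
    have htel := telescope f hf B T hTsub l
    rw [hT0, Finset.univ_inter] at htel
    have := ih W'
    simp only [hT] at htel ⊢
    linarith
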